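/- Let f_i : [0,∞)^n → ℝ, i = 1,…,n, be continuous functions satisfying the entropy-dissipation condition ∑_{i=1}^n π_i f_i(u)(log u_i + λ_i) ≤ 0 for all u ∈ (0,∞)^n, where π_i > 0 and λ_i ∈ ℝ. Then each f_i is quasi-positive: f_i(u) ≥ 0 for every u ∈ [0,∞)^n with u_i = 0. -/

import Mathlib

open Filter Topology

theorem quasi_positivity_of_entropy_dissipation (n : ℕ) (hn : 1 ≤ n)
    (f : Fin n → (Fin n → ℝ) → ℝ)
    (hf : ∀ i, ContinuousOn (f i) {u : Fin n → ℝ | ∀ k, 0 ≤ u k})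
    (π : Fin n → ℝ) (hπ : ∀ i, 0 < π i) (lam : Fin n → ℝ)
    (hdiss : ∀ u : Fin n → ℝ, (∀ k, 0 < u k) →
      ∑ i, π i * f i u * (Real.log (u i) + lam i) ≤ 0)
    (i : Fin n) (u : Fin n → ℝ) (hu : ∀ k, 0 ≤ u k) (hui : u i = 0) :
    0 ≤ f i u := by
  set M : ℝ := ∑ k, π k * |f k u| with hM
  have hM0 : 0 ≤ M := Finset.sum_nonneg fun k _ =>
    mul_nonneg (hπ k).le (abs_nonneg _)
  -- key estimate for every θ > 0
  have key : ∀ θ : ℝ, 0 < θ → 0 ≤ π i * f i u + θ * M := by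
    intro θ hθ
    set v : ℝ → Fin n → ℝ := fun t k => if k = i then t else u k + t ^ θ with hv
    have hvpos : ∀ t : ℝ, 0 < t → ∀ k, 0 < v t k := by
      intro t ht k
      simp only [hv]
      split
      · exact ht
      · exact add_pos_of_nonneg_of_pos (hu k) (Real.rpow_pos_of_pos ht θ)
    have hvmem : ∀ᶠ t in 𝓝[>] (0:ℝ), v t ∈ {u : Fin n → ℝ | ∀ k, 0 ≤ u k} := by
      filter_upwards [self_mem_nhdsWithin] with t ht k
      exact (hvpos t ht k).le
    -- t ^ θ → 0
    have hrpow : Tendsto (fun t : ℝ => t ^ θ) (𝓝[>] (0:ℝ)) (𝓝 0) := by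
      have h1 : Tendsto (fun t : ℝ => Real.exp (Real.log t * θ)) (𝓝[>] (0:ℝ)) (𝓝 0) := by
        refine Real.tendsto_exp_atBot.comp ?_
        exact (Real.tendsto_log_nhdsGT_zero.atBot_mul_const hθ)
      refine h1.congr' ?_
      filter_upwards [self_mem_nhdsWithin] with t ht
      exact (Real.rpow_def_of_pos ht θ).symm
    have hvt : Tendsto v (𝓝[>] (0:ℝ)) (𝓝 u) := by
      rw [tendsto_pi_nhds]
      intro k
      by_cases hk : k = i
      · subst hk
        simpa [hv, hui] using tendsto_nhdsWithin_of_tendsto_nhds (f := fun t : ℝ => t)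
          (by exact (tendsto_id (α := ℝ)))
      · have : Tendsto (fun t : ℝ => u k + t ^ θ) (𝓝[>] (0:ℝ)) (𝓝 (u k + 0)) :=
          tendsto_const_nhds.add hrpow
        simpa [hv, hk] using this
    have hvt' : Tendsto v (𝓝[>] (0:ℝ)) (𝓝[{u : Fin n → ℝ | ∀ k, 0 ≤ u k}] u) :=
      tendsto_nhdsWithin_iff.mpr ⟨hvt, hvmem⟩
    have hfk : ∀ k, Tendsto (fun t => f k (v t)) (𝓝[>] (0:ℝ)) (𝓝 (f k u)) := by
      intro k
      exact ((hf k u hu).tendsto).comp hvt'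
    have hlogtop : Tendsto (fun t : ℝ => -Real.log t) (𝓝[>] (0:ℝ)) atTop :=
      tendsto_neg_atBot_atTop.comp Real.tendsto_log_nhdsGT_zero
    have hinv0 : ∀ a : ℝ, Tendsto (fun t : ℝ => a / (-Real.log t)) (𝓝[>] (0:ℝ)) (𝓝 0) :=
      fun a => Tendsto.div_atTop tendsto_const_nhds hlogtop
    -- the limit coefficients
    set c : Fin n → ℝ := fun k => if k = i then -1 else if u k = 0 then -θ else 0 with hc
    -- per coordinate quotient limits
    have hq : ∀ k, Tendsto (fun t => (Real.log (v t k) + lam k) / (-Real.log t))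
        (𝓝[>] (0:ℝ)) (𝓝 (c k)) := by
      intro k
      by_cases hk : k = i
      · subst hk
        have : Tendsto (fun t : ℝ => -1 + lam k / (-Real.log t)) (𝓝[>] (0:ℝ)) (𝓝 (-1 + 0)) :=
          tendsto_const_nhds.add (hinv0 (lam k))
        refine (this.congr' ?_).mono_right (by simp [hc])
        filter_upwards [Ioo_mem_nhdsGT_of_mem (by norm_num : (0:ℝ) ∈ Set.Ico 0 1)] with t ht
        have hlt : Real.log t < 0 := Real.log_neg ht.1 ht.2
        have hne : Real.log t ≠ 0 := hlt.ne
        have hvtk : v t k = t := by simp [hv]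
        rw [hvtk, eq_div_iff (neg_ne_zero.mpr hne)]
        have hdm : lam k / -Real.log t * Real.log t = -lam k := by
          rw [div_neg, neg_mul, div_mul_cancel₀ _ hne]
        linear_combination -hdm
      · by_cases hk0 : u k = 0
        · have : Tendsto (fun t : ℝ => -θ + lam k / (-Real.log t)) (𝓝[>] (0:ℝ))
              (𝓝 (-θ + 0)) := tendsto_const_nhds.add (hinv0 (lam k))
          refine (this.congr' ?_).mono_right (by simp [hc, hk, hk0])
          filter_upwards [Ioo_mem_nhdsGT_of_mem (by norm_num : (0:ℝ) ∈ Set.Ico 0 1)] with t ht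
          have hlt : Real.log t < 0 := Real.log_neg ht.1 ht.2
          have hne : Real.log t ≠ 0 := hlt.ne
          have hvtk : Real.log (v t k) = θ * Real.log t := by
            have hv1 : v t k = t ^ θ := by simp [hv, hk, hk0]
            rw [hv1, Real.log_rpow ht.1]
          rw [hvtk, eq_div_iff (neg_ne_zero.mpr hne)]
          have hdm : lam k / -Real.log t * Real.log t = -lam k := by
            rw [div_neg, neg_mul, div_mul_cancel₀ _ hne]
          linear_combination -hdm
        · have hpos : 0 < u k := lt_of_le_of_ne (hu k) (Ne.symm hk0)
          have hnum : Tendsto (fun t : ℝ => Real.log (v t k) + lam k) (𝓝[>] (0:ℝ))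
              (𝓝 (Real.log (u k) + lam k)) := by
            have : Tendsto (fun t : ℝ => u k + t ^ θ) (𝓝[>] (0:ℝ)) (𝓝 (u k + 0)) :=
              tendsto_const_nhds.add hrpow
            rw [add_zero] at this
            have hcont : ContinuousAt Real.log (u k) := Real.continuousAt_log hpos.ne'
            have := (hcont.tendsto.comp this).add (tendsto_const_nhds (x := lam k))
            simpa [hv, hk, Function.comp] using this
          have := Tendsto.div_atTop hnum hlogtop
          refine this.mono_right (by simp [hc, hk, hk0])
    -- sum limit
    have hsum : Tendsto (fun t => ∑ k, π k * f k (v t) *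
        ((Real.log (v t k) + lam k) / (-Real.log t))) (𝓝[>] (0:ℝ))
        (𝓝 (∑ k, π k * f k u * c k)) := by
      refine tendsto_finset_sum _ fun k _ => ?_
      exact ((tendsto_const_nhds.mul (hfk k)).mul (hq k))
    -- the sum is eventually ≤ 0
    have hle : ∀ᶠ t in 𝓝[>] (0:ℝ), (∑ k, π k * f k (v t) *
        ((Real.log (v t k) + lam k) / (-Real.log t))) ≤ 0 := by
      filter_upwards [Ioo_mem_nhdsGT_of_mem (by norm_num : (0:ℝ) ∈ Set.Ico 0 1)] with t ht
      have hlt : 0 < -Real.log t := by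
        have := Real.log_neg ht.1 ht.2; linarith
      have hd := hdiss (v t) (hvpos t ht.1)
      have : (∑ k, π k * f k (v t) * ((Real.log (v t k) + lam k) / (-Real.log t)))
          = (∑ k, π k * f k (v t) * (Real.log (v t k) + lam k)) / (-Real.log t) := by
        rw [Finset.sum_div]
        exact Finset.sum_congr rfl fun k _ => by ring
      rw [this]
      exact div_nonpos_of_nonpos_of_nonneg hd hlt.le
    have hL : (∑ k, π k * f k u * c k) ≤ 0 := le_of_tendsto hsum hle
    -- lower bound the limit sum
    have hsplit : (∑ k, π k * f k u * c k)
        = π i * f i u * (-1) + ∑ k ∈ Finset.univ.erase i, π k * f k u * c k := by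
      rw [← Finset.add_sum_erase _ _ (Finset.mem_univ i)]
      simp [hc]
    have hbound : -(θ * M) ≤ ∑ k ∈ Finset.univ.erase i, π k * f k u * c k := by
      have h1 : ∀ k ∈ Finset.univ.erase i, -(θ * (π k * |f k u|)) ≤ π k * f k u * c k := by
        intro k hk
        have hki : k ≠ i := Finset.ne_of_mem_erase hk
        have hck : |c k| ≤ θ := by
          simp only [hc, if_neg hki]
          split
          · rw [abs_neg, abs_of_pos hθ]
          · simpa using hθ.le
        calc -(θ * (π k * |f k u|)) ≤ -(|c k| * (π k * |f k u|)) := by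
              have := mul_le_mul_of_nonneg_right hck
                (mul_nonneg (hπ k).le (abs_nonneg (f k u)))
              linarith
          _ ≤ π k * f k u * c k := by
              have := neg_abs_le (π k * f k u * c k)
              have habs : |π k * f k u * c k| = |c k| * (π k * |f k u|) := by
                rw [abs_mul, abs_mul, abs_of_pos (hπ k)]; ring
              linarith [habs ▸ this]
      have h2 : ∑ k ∈ Finset.univ.erase i, θ * (π k * |f k u|) ≤ θ * M := by
        rw [hM, Finset.mul_sum]
        refine Finset.sum_le_sum_of_subset_of_nonneg (Finset.subset_univ _) ?_
        intro k _ _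
        exact mul_nonneg hθ.le (mul_nonneg (hπ k).le (abs_nonneg _))
      calc -(θ * M) ≤ -∑ k ∈ Finset.univ.erase i, θ * (π k * |f k u|) := neg_le_neg h2
        _ = ∑ k ∈ Finset.univ.erase i, -(θ * (π k * |f k u|)) := by
            rw [Finset.sum_neg_distrib]
        _ ≤ _ := Finset.sum_le_sum h1
    nlinarith [hL, hbound, hsplit]
  -- conclude: π i * f i u ≥ 0
  have h0 : 0 ≤ π i * f i u := by
    refine le_of_forall_pos_le_add fun ε hε => ?_
    have := key (ε / (M + 1)) (div_pos hε (by linarith))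
    have hθM : (ε / (M + 1)) * M ≤ ε := by
      rw [div_mul_eq_mul_div, div_le_iff₀ (by linarith)]
      nlinarith
    linarith
  exact nonneg_of_mul_nonneg_right h0 (hπ i)
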